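/- Define α(r) by S(r) = 1/(r² + 1/2 - (4r²+1)/(12(r²+α(r)))), i.e., α(r) = ((12r⁴+2r²-1)S(r) - 12r²)/(12 - (12r²+6)S(r)). Then lim_{r→∞} α(r) = 13/30. -/

import Mathlib

open Filter Topology

noncomputable def S (r : ℝ) : ℝ :=
  ∑' n : ℕ, (2 * ((n : ℝ) + 1)) / ((((n : ℝ) + 1) ^ 2 + r ^ 2) ^ 2)

noncomputable def α (r : ℝ) : ℝ :=
  ((12 * r ^ 4 + 2 * r ^ 2 - 1) * S r - 12 * r ^ 2) / (12 - (12 * r ^ 2 + 6) * S r)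

set_option maxHeartbeats 1600000

lemma hasSum_telescope_of (g : ℕ → ℝ) (hmono : ∀ n, g (n+1) ≤ g n)
    (h0 : Tendsto g atTop (nhds 0)) : HasSum (fun n => g n - g (n+1)) (g 0) := by
  have hanti : Antitone g := antitone_nat_of_succ_le hmono
  have hnn : ∀ n, 0 ≤ g n := fun n =>
    le_of_tendsto h0 (Filter.eventually_atTop.2 ⟨n, fun m hm => hanti hm⟩)
  have hps : ∀ N, ∑ i ∈ Finset.range N, (g i - g (i+1)) = g 0 - g N :=
    fun N => Finset.sum_range_sub' g N
  have hsum : Summable (fun n => g n - g (n+1)) := by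
    apply summable_of_sum_range_le (c := g 0) (fun n => sub_nonneg.2 (hmono n))
    intro n; rw [hps]; linarith [hnn n]
  rw [hsum.hasSum_iff_tendsto_nat]
  simp only [hps]
  simpa using tendsto_const_nhds.sub h0

noncomputable def bf (r : ℝ) (n : ℕ) : ℝ := ((n:ℝ)+1/2)^2 + r^2 + 1/4

lemma bf_pos (r : ℝ) (n : ℕ) : 0 < bf r n := by
  unfold bf; positivity

lemma bf_ge_one (r : ℝ) (hr : 1 ≤ r) (n : ℕ) : 1 ≤ bf r n := by
  unfold bf
  have : (0:ℝ) ≤ (n:ℝ) := Nat.cast_nonneg n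
  nlinarith

lemma bf_ge (r : ℝ) (hr : 1 ≤ r) (n : ℕ) : (n:ℝ)+1 ≤ bf r n := by
  unfold bf
  have : (0:ℝ) ≤ (n:ℝ) := Nat.cast_nonneg n
  nlinarith

lemma bf_mono (r : ℝ) (n : ℕ) : bf r n ≤ bf r (n+1) := by
  unfold bf
  have : (0:ℝ) ≤ (n:ℝ) := Nat.cast_nonneg n
  push_cast
  nlinarith

lemma hasSum_bpow (r : ℝ) (hr : 1 ≤ r) (k : ℕ) (hk : k ≠ 0) :
    HasSum (fun n => 1/(bf r n)^k - 1/(bf r (n+1))^k) (1/(r^2+1/2)^k) := by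
  have hb0 : bf r 0 = r^2+1/2 := by unfold bf; push_cast; ring
  have hmono : ∀ n, 1/(bf r (n+1))^k ≤ 1/(bf r n)^k := by
    intro n
    apply one_div_le_one_div_of_le (pow_pos (bf_pos r n) k)
    exact pow_le_pow_left₀ (bf_pos r n).le (bf_mono r n) k
  have h0 : Tendsto (fun n => 1/(bf r n)^k) atTop (nhds 0) := by
    apply squeeze_zero (fun n => (one_div_pos.2 (pow_pos (bf_pos r n) k)).le) (g := fun n : ℕ => 1/((n:ℝ)+1))
    · intro n
      apply one_div_le_one_div_of_le (by positivity)
      calc (n:ℝ)+1 ≤ bf r n := bf_ge r hr n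
        _ ≤ (bf r n)^k := le_self_pow₀ (bf_ge_one r hr n) hk
    · exact tendsto_one_div_add_atTop_nhds_zero_nat
  have := hasSum_telescope_of (fun n => 1/(bf r n)^k) hmono h0
  simpa [hb0] using this

lemma hasSum_gtele (r : ℝ) (hr : 1 ≤ r) :
    HasSum (fun n : ℕ => 1/(((n:ℝ)+r)*((n:ℝ)+1+r))) (1/r) := by
  have hpos : ∀ n : ℕ, (0:ℝ) < (n:ℝ)+r := fun n => by
    have : (0:ℝ) ≤ (n:ℝ) := Nat.cast_nonneg n; linarith
  have hmono : ∀ n : ℕ, 1/(((n+1:ℕ):ℝ)+r) ≤ 1/(((n:ℝ))+r) := by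
    intro n
    apply one_div_le_one_div_of_le (hpos n)
    push_cast; linarith
  have h0 : Tendsto (fun n : ℕ => 1/((n:ℝ)+r)) atTop (nhds 0) := by
    apply squeeze_zero (fun n => (one_div_pos.2 (hpos n)).le) (g := fun n : ℕ => 1/((n:ℝ)+1))
    · intro n
      apply one_div_le_one_div_of_le (by positivity)
      linarith
    · exact tendsto_one_div_add_atTop_nhds_zero_nat
  have h := hasSum_telescope_of (fun n : ℕ => 1/((n:ℝ)+r)) hmono h0
  have heq : (fun n : ℕ => 1/((n:ℝ)+r) - 1/(((n+1:ℕ):ℝ)+r))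
      = (fun n : ℕ => 1/(((n:ℝ)+r)*((n:ℝ)+1+r))) := by
    funext n
    have h1 : ((n:ℝ)+r) ≠ 0 := (hpos n).ne'
    have h2 : ((n:ℝ)+1+r) ≠ 0 := by have := hpos n; intro h; linarith
    push_cast
    rw [div_sub_div _ _ h1 h2, div_eq_div_iff (by positivity) (by positivity)]
    ring
  rw [heq] at h
  simpa using h
section ids
variable {m p q μ u X D : ℝ}

lemma id1 (hX : X = (u-m)*(u+m)) (h1 : u-m ≠ 0) (h2 : u+m ≠ 0) :
    1/(u-m) - 1/(u+m) = 2*m/X := by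
  subst hX; field_simp; ring

lemma id3 (hX : X = (u-m)*(u+m)) (hu : u = m^2 + p) (h1 : u-m ≠ 0) (h2 : u+m ≠ 0) :
    1/(u-m)^3 - 1/(u+m)^3
      = 3*(2*m/X^2) + 4*(2*m*u/X^3) - 4*p*(2*m/X^3) := by
  subst hX hu; field_simp; ring

lemma id4 (hX : X = (u-m)*(u+m)) (hu : u = m^2 + p) (h1 : u-m ≠ 0) (h2 : u+m ≠ 0) :
    1/(u-m)^4 - 1/(u+m)^4
      = 4*(2*m*u/X^3) + 8*(2*m/X^3) + 8*(2*m*u/X^4) - 8*p*(2*m/X^4) - 8*p*(2*m*u/X^4) := by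
  subst hX hu; field_simp; ring

lemma id5 (hX : X = (u-m)*(u+m)) (h1 : u-m ≠ 0) (h2 : u+m ≠ 0) :
    1/(u-m)^5 - 1/(u+m)^5
      = 5*(2*m/X^3) + 20*(2*m*m^2/X^4) + 16*(2*m*m^4/X^5) := by
  subst hX; field_simp; ring

lemma idgeo (hXD : X = D + q) (hD : D ≠ 0) (hX0 : X ≠ 0) :
    2*m/D = 2*m/X + q*(2*m/X^2) + q^2*(2*m/X^3) + q^3*(2*m/(X^3*D)) := by
  subst hXD; field_simp; ring

lemma main_id (hX : X = (u-m)*(u+m)) (hu : u = m^2 + p) (hXD : X = D + q)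
    (hμ : μ = 8*q/3 + 4*p*q/3 + q^2)
    (h1 : u-m ≠ 0) (h2 : u+m ≠ 0) (hD : D ≠ 0) (hX0 : X ≠ 0) :
    (1/(u-m) - 1/(u+m)) + (q/3)*(1/(u-m)^3 - 1/(u+m)^3) - (q/3)*(1/(u-m)^4 - 1/(u+m)^4)
      + (μ/5)*(1/(u-m)^5 - 1/(u+m)^5)
    = 2*m/D - ( q^3*(2*m/(X^3*D)) + (8*q/3 - 8*p*q/3)*(2*m*u/X^4) - (8*p*q/3)*(2*m/X^4)
      - 4*μ*(2*m*m^2/X^4) - (16*μ/5)*(2*m*m^4/X^5) ) := by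
  rw [id1 hX h1 h2, id3 hX hu h1 h2, id4 hX hu h1 h2, id5 hX h1 h2,
      idgeo hXD hD hX0, hμ]
  ring

end ids

lemma R_bound (m r u p q μ X D Y : ℝ) (hm : 1 ≤ m) (hr : 1 ≤ r)
    (hY : Y = m^2 + r^2)
    (hu : u = m^2+r^2+1/2) (hp : p = r^2+1/2) (hq : q = r^2+1/4)
    (hμ : μ = 8*q/3 + 4*p*q/3 + q^2) (hD : D = Y^2) (hXD : X = D + q) :
    |q^3*(2*m/(X^3*D)) + (8*q/3 - 8*p*q/3)*(2*m*u/X^4) - (8*p*q/3)*(2*m/X^4)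
      - 4*μ*(2*m*m^2/X^4) - (16*μ/5)*(2*m*m^4/X^5)|
    ≤ 150*r^4*(2*m/Y^7) := by
  have hm0 : (0:ℝ) < m := by linarith
  have hr0 : (0:ℝ) < r := by linarith
  have hr2 : (1:ℝ) ≤ r^2 := by nlinarith
  have hY2 : (2:ℝ) ≤ Y := by rw [hY]; nlinarith
  have hY0 : (0:ℝ) < Y := by linarith
  have hY' : Y ≠ 0 := hY0.ne'
  have hrY : r^2 ≤ Y := by rw [hY]; nlinarith
  have hmY : m^2 ≤ Y := by rw [hY]; nlinarith
  have hq0 : (0:ℝ) ≤ q := by rw [hq]; nlinarith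
  have hq2 : q ≤ 2*r^2 := by rw [hq]; nlinarith
  have hp1 : (1:ℝ) ≤ p := by rw [hp]; nlinarith
  have hp2 : p ≤ 2*r^2 := by rw [hp]; nlinarith
  have hμ0 : (0:ℝ) ≤ μ := by rw [hμ]; nlinarith
  have hμ15 : μ ≤ 15*r^4 := by rw [hμ, hq, hp]; nlinarith
  have hD0 : (0:ℝ) < D := by rw [hD]; positivity
  have hX0 : (0:ℝ) < X := by rw [hXD]; linarith
  have hXge : Y^2 ≤ X := by rw [hXD, hD]; linarith
  have hu2 : u ≤ 2*Y := by rw [hu, hY]; nlinarith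
  have hu0 : (0:ℝ) < u := by rw [hu]; nlinarith
  have hm4Y : m^4 ≤ Y^2 := by nlinarith [mul_le_mul hmY hmY (sq_nonneg m) (by linarith : (0:ℝ) ≤ Y)]
  have hX3D : Y^8 ≤ X^3*D := by
    calc Y^8 = (Y^2)^3*Y^2 := by ring
      _ ≤ X^3*Y^2 := by gcongr
      _ = X^3*D := by rw [hD]
  have hX4 : Y^8 ≤ X^4 := by
    calc Y^8 = (Y^2)^4 := by ring
      _ ≤ X^4 := by gcongr
  have hX5 : Y^10 ≤ X^5 := by
    calc Y^10 = (Y^2)^5 := by ring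
      _ ≤ X^5 := by gcongr
  have hpq : p*q ≤ 4*r^4 := by nlinarith [mul_le_mul hp2 hq2 hq0 (by positivity : (0:ℝ) ≤ 2*r^2)]
  have hmY0 : (0:ℝ) ≤ r^4*m*Y := by positivity
  have hmr4 : (0:ℝ) ≤ r^4*m := by positivity
  have hP1 : q^3*(2*m/(X^3*D)) ≤ 8*r^4*(2*m/Y^7) := by
    have hq3 : q^3 ≤ 8*r^4*r^2 := by linarith [pow_le_pow_left₀ hq0 hq2 3]
    calc q^3*(2*m/(X^3*D)) = (q^3*(2*m))/(X^3*D) := by ring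
      _ ≤ ((8*r^4*r^2)*(2*m))/Y^8 := by
          apply div_le_div₀ (by positivity) ?_ (by positivity) hX3D
          exact mul_le_mul_of_nonneg_right hq3 (by positivity)
      _ ≤ (8*r^4*(2*m)*Y)/Y^8 := by
          apply div_le_div_of_nonneg_right ?_ (by positivity)
          linarith [mul_le_mul_of_nonneg_left hrY (by positivity : (0:ℝ) ≤ 8*r^4*(2*m))]
      _ = 8*r^4*(2*m/Y^7) := by field_simp
  have hP2 : (8*p*q/3 - 8*q/3)*(2*m*u/X^4) ≤ 44*r^4*(2*m/Y^7) := by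
    calc (8*p*q/3 - 8*q/3)*(2*m*u/X^4) = ((8*p*q/3 - 8*q/3)*(2*m*u))/X^4 := by ring
      _ ≤ ((8*(4*r^4)/3)*(2*m*(2*Y)))/Y^8 := by
          apply div_le_div₀ (by positivity) ?_ (by positivity) hX4
          have hc : 8*p*q/3 - 8*q/3 ≤ 8*(4*r^4)/3 := by linarith [hpq, hq0]
          have hc0 : (0:ℝ) ≤ 8*p*q/3 - 8*q/3 := by
            linarith [mul_le_mul_of_nonneg_right hp1 hq0]
          have h2 : 2*m*u ≤ 2*m*(2*Y) := mul_le_mul_of_nonneg_left hu2 (by positivity)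
          exact mul_le_mul hc h2 (by positivity) (by positivity)
      _ ≤ (44*r^4*(2*m)*Y)/Y^8 := by
          apply div_le_div_of_nonneg_right ?_ (by positivity)
          linarith [hmY0]
      _ = 44*r^4*(2*m/Y^7) := by field_simp
  have hP3 : (8*p*q/3)*(2*m/X^4) ≤ 6*r^4*(2*m/Y^7) := by
    calc (8*p*q/3)*(2*m/X^4) = ((8*p*q/3)*(2*m))/X^4 := by ring
      _ ≤ ((8*(4*r^4)/3)*(2*m))/Y^8 := by
          apply div_le_div₀ (by positivity) ?_ (by positivity) hX4
          exact mul_le_mul_of_nonneg_right (by linarith [hpq]) (by positivity)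
      _ ≤ (6*r^4*(2*m)*Y)/Y^8 := by
          apply div_le_div_of_nonneg_right ?_ (by positivity)
          linarith [mul_le_mul_of_nonneg_left hY2 hmr4, hmr4]
      _ = 6*r^4*(2*m/Y^7) := by field_simp
  have hP4 : 4*μ*(2*m*m^2/X^4) ≤ 60*r^4*(2*m/Y^7) := by
    calc 4*μ*(2*m*m^2/X^4) = (4*μ*(2*m*m^2))/X^4 := by ring
      _ ≤ (4*(15*r^4)*(2*m*Y))/Y^8 := by
          apply div_le_div₀ (by positivity) ?_ (by positivity) hX4
          have h2 : 2*m*m^2 ≤ 2*m*Y := mul_le_mul_of_nonneg_left hmY (by positivity)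
          exact mul_le_mul (by linarith) h2 (by positivity) (by positivity)
      _ = (60*r^4*(2*m)*Y)/Y^8 := by ring
      _ = 60*r^4*(2*m/Y^7) := by field_simp
  have hP5 : (16*μ/5)*(2*m*m^4/X^5) ≤ 24*r^4*(2*m/Y^7) := by
    calc (16*μ/5)*(2*m*m^4/X^5) = ((16*μ/5)*(2*m*m^4))/X^5 := by ring
      _ ≤ ((16*(15*r^4)/5)*(2*m*Y^2))/Y^10 := by
          apply div_le_div₀ (by positivity) ?_ (by positivity) hX5
          have h2 : 2*m*m^4 ≤ 2*m*Y^2 := mul_le_mul_of_nonneg_left hm4Y (by positivity)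
          exact mul_le_mul (by linarith) h2 (by positivity) (by positivity)
      _ ≤ (24*r^4*(2*m)*Y^3)/Y^10 := by
          apply div_le_div_of_nonneg_right ?_ (by positivity)
          linarith [mul_le_mul_of_nonneg_left hY2 (by positivity : (0:ℝ) ≤ r^4*m*Y^2),
            (by positivity : (0:ℝ) ≤ r^4*m*Y^2)]
      _ = 24*r^4*(2*m/Y^7) := by field_simp
  have e1 : (0:ℝ) ≤ q^3*(2*m/(X^3*D)) := by positivity
  have e2 : (0:ℝ) ≤ (8*p*q/3 - 8*q/3)*(2*m*u/X^4) := by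
    apply mul_nonneg ?_ (by positivity)
    linarith [mul_le_mul_of_nonneg_right hp1 hq0]
  have e3 : (0:ℝ) ≤ (8*p*q/3)*(2*m/X^4) := by positivity
  have e4 : (0:ℝ) ≤ 4*μ*(2*m*m^2/X^4) := by positivity
  have e5 : (0:ℝ) ≤ (16*μ/5)*(2*m*m^4/X^5) := by positivity
  have hP2' : (8*q/3 - 8*p*q/3)*(2*m*u/X^4) = -((8*p*q/3 - 8*q/3)*(2*m*u/X^4)) := by ring
  rw [abs_le]
  constructor
  · rw [hP2']; linarith
  · rw [hP2']; linarith

noncomputable def Mfun (r : ℝ) : ℝ :=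
  1/(r^2+1/2) + ((r^2+1/4)/3)*(1/(r^2+1/2)^3) - ((r^2+1/4)/3)*(1/(r^2+1/2)^4)
    + ((8*(r^2+1/4)/3 + 4*(r^2+1/2)*(r^2+1/4)/3 + (r^2+1/4)^2)/5)*(1/(r^2+1/2)^5)

lemma cmp_help (m r : ℝ) (hm : 1 ≤ m) (hr : 1 ≤ r) (k : ℕ) :
    2*m/(m^2+r^2)^(k+2) ≤ 2/(r^(2*k+1)*((m-1+r)*(m+r))) := by
  have h1 : (0:ℝ) < m-1+r := by linarith
  have h2 : (0:ℝ) < m+r := by linarith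
  have hr0 : (0:ℝ) < r := by linarith
  have hY : (0:ℝ) < m^2+r^2 := by positivity
  rw [div_le_div_iff₀ (by positivity) (by positivity)]
  have A : 2*m*r ≤ m^2+r^2 := by nlinarith [sq_nonneg (m-r)]
  have B : (m-1+r)*(m+r) ≤ 2*(m^2+r^2) := by nlinarith [sq_nonneg (m-r), sq_nonneg (m+r)]
  have C : r^(2*k) ≤ (m^2+r^2)^k := by
    calc r^(2*k) = (r^2)^k := by rw [← pow_mul]
      _ ≤ (m^2+r^2)^k := by
          apply pow_le_pow_left₀ (by positivity)
          nlinarith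
  have K1 : (2*m*r)*((m-1+r)*(m+r)) ≤ (m^2+r^2)*(2*(m^2+r^2)) :=
    mul_le_mul A B (by positivity) (by positivity)
  have K2 : ((2*m*r)*((m-1+r)*(m+r)))*r^(2*k) ≤ ((m^2+r^2)*(2*(m^2+r^2)))*(m^2+r^2)^k :=
    mul_le_mul K1 C (by positivity) (by positivity)
  calc 2*m*(r^(2*k+1)*((m-1+r)*(m+r))) = ((2*m*r)*((m-1+r)*(m+r)))*r^(2*k) := by ring
    _ ≤ ((m^2+r^2)*(2*(m^2+r^2)))*(m^2+r^2)^k := K2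
    _ = 2*(m^2+r^2)^(k+2) := by ring

noncomputable def Rf (r : ℝ) (n : ℕ) : ℝ :=
  (r^2+1/4)^3*(2*((n:ℝ)+1)/((bf r n * bf r (n+1))^3*((((n:ℝ)+1)^2+r^2)^2)))
  + (8*(r^2+1/4)/3 - 8*(r^2+1/2)*(r^2+1/4)/3)*(2*((n:ℝ)+1)*(((n:ℝ)+1)^2+r^2+1/2)/(bf r n * bf r (n+1))^4)
  - (8*(r^2+1/2)*(r^2+1/4)/3)*(2*((n:ℝ)+1)/(bf r n * bf r (n+1))^4)
  - 4*(8*(r^2+1/4)/3 + 4*(r^2+1/2)*(r^2+1/4)/3 + (r^2+1/4)^2)*(2*((n:ℝ)+1)*((n:ℝ)+1)^2/(bf r n * bf r (n+1))^4)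
  - (16*(8*(r^2+1/4)/3 + 4*(r^2+1/2)*(r^2+1/4)/3 + (r^2+1/4)^2)/5)*(2*((n:ℝ)+1)*((n:ℝ)+1)^4/(bf r n * bf r (n+1))^5)

lemma cast_ge_one (n : ℕ) : (1:ℝ) ≤ (n:ℝ)+1 := by
  have := Nat.cast_nonneg (α := ℝ) n; linarith

lemma hterm (r : ℝ) (hr : 1 ≤ r) (n : ℕ) :
    (((1/bf r n - 1/bf r (n+1))
      + (r^2+1/4)/3*(1/(bf r n)^3 - 1/(bf r (n+1))^3))
      - (r^2+1/4)/3*(1/(bf r n)^4 - 1/(bf r (n+1))^4))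
      + (8*(r^2+1/4)/3 + 4*(r^2+1/2)*(r^2+1/4)/3 + (r^2+1/4)^2)/5*(1/(bf r n)^5 - 1/(bf r (n+1))^5)
    = 2*((n:ℝ)+1)/((((n:ℝ)+1)^2+r^2)^2) - Rf r n := by
  have hbm : bf r n = (((n:ℝ)+1)^2+r^2+1/2) - ((n:ℝ)+1) := by unfold bf; push_cast; ring
  have hbp : bf r (n+1) = (((n:ℝ)+1)^2+r^2+1/2) + ((n:ℝ)+1) := by unfold bf; push_cast; ring
  have h1' : (((n:ℝ)+1)^2+r^2+1/2) - ((n:ℝ)+1) ≠ 0 := by rw [← hbm]; exact (bf_pos r n).ne'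
  have h2' : (((n:ℝ)+1)^2+r^2+1/2) + ((n:ℝ)+1) ≠ 0 := by rw [← hbp]; exact (bf_pos r (n+1)).ne'
  have hD' : ((((n:ℝ)+1)^2+r^2)^2) ≠ 0 := by positivity
  have hX0' : ((((n:ℝ)+1)^2+r^2+1/2) - ((n:ℝ)+1))*((((n:ℝ)+1)^2+r^2+1/2) + ((n:ℝ)+1)) ≠ 0 := by
    rw [← hbm, ← hbp]; exact (mul_pos (bf_pos r n) (bf_pos r (n+1))).ne'
  unfold Rf
  rw [hbm, hbp]
  exact main_id (m := ((n:ℝ)+1)) (p := r^2+1/2) (q := r^2+1/4)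
    (μ := 8*(r^2+1/4)/3 + 4*(r^2+1/2)*(r^2+1/4)/3 + (r^2+1/4)^2)
    (u := (((n:ℝ)+1)^2+r^2+1/2))
    (X := ((((n:ℝ)+1)^2+r^2+1/2) - ((n:ℝ)+1))*((((n:ℝ)+1)^2+r^2+1/2) + ((n:ℝ)+1)))
    (D := (((n:ℝ)+1)^2+r^2)^2)
    rfl (by ring) (by ring) rfl h1' h2' hD' hX0'

lemma S_approx (r : ℝ) (hr : 1 ≤ r) : |S r - Mfun r| ≤ 300/r^8 := by
  have hr0 : (0:ℝ) < r := by linarith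
  have h1 := hasSum_bpow r hr 1 one_ne_zero
  simp only [pow_one] at h1
  have h3 := hasSum_bpow r hr 3 (by norm_num)
  have h4 := hasSum_bpow r hr 4 (by norm_num)
  have h5 := hasSum_bpow r hr 5 (by norm_num)
  have combo := ((h1.add (h3.mul_left ((r^2+1/4)/3))).sub (h4.mul_left ((r^2+1/4)/3))).add
      (h5.mul_left ((8*(r^2+1/4)/3 + 4*(r^2+1/2)*(r^2+1/4)/3 + (r^2+1/4)^2)/5))
  have hmain : HasSum (fun n : ℕ => 2*((n:ℝ)+1)/((((n:ℝ)+1)^2+r^2)^2) - Rf r n) (Mfun r) := by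
    have hE : (fun n : ℕ => 2*((n:ℝ)+1)/((((n:ℝ)+1)^2+r^2)^2) - Rf r n)
        = (fun n : ℕ =>
          (((1/bf r n - 1/bf r (n+1))
            + (r^2+1/4)/3*(1/(bf r n)^3 - 1/(bf r (n+1))^3))
            - (r^2+1/4)/3*(1/(bf r n)^4 - 1/(bf r (n+1))^4))
            + (8*(r^2+1/4)/3 + 4*(r^2+1/2)*(r^2+1/4)/3 + (r^2+1/4)^2)/5
              *(1/(bf r n)^5 - 1/(bf r (n+1))^5)) :=
      funext fun n => (hterm r hr n).symm
    rw [hE, Mfun]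
    exact combo
  have hgs := hasSum_gtele r hr
  have hbase : Summable (fun n : ℕ => 2*((n:ℝ)+1)/((((n:ℝ)+1)^2+r^2)^2)) := by
    apply Summable.of_nonneg_of_le (fun n => by positivity) ?_ (hgs.summable.mul_left (2/r))
    intro n
    have h := cmp_help ((n:ℝ)+1) r (cast_ge_one n) hr 0
    calc 2*((n:ℝ)+1)/((((n:ℝ)+1)^2+r^2)^2)
        ≤ 2/(r^(2*0+1)*((((n:ℝ)+1)-1+r)*(((n:ℝ)+1)+r))) := h
      _ = 2/r*(1/(((n:ℝ)+r)*((n:ℝ)+1+r))) := by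
          rw [div_mul_div_comm, mul_one]; ring_nf
  have hw : Summable (fun n : ℕ => 2*((n:ℝ)+1)/((((n:ℝ)+1)^2+r^2)^7)) := by
    apply Summable.of_nonneg_of_le (fun n => by positivity) ?_ (hgs.summable.mul_left (2/r^11))
    intro n
    have h := cmp_help ((n:ℝ)+1) r (cast_ge_one n) hr 5
    calc 2*((n:ℝ)+1)/((((n:ℝ)+1)^2+r^2)^7)
        ≤ 2/(r^(2*5+1)*((((n:ℝ)+1)-1+r)*(((n:ℝ)+1)+r))) := h
      _ = 2/r^11*(1/(((n:ℝ)+r)*((n:ℝ)+1+r))) := by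
          rw [div_mul_div_comm, mul_one]; ring_nf
  have htw : ∑' n : ℕ, 2*((n:ℝ)+1)/((((n:ℝ)+1)^2+r^2)^7) ≤ 2/r^12 := by
    calc ∑' n : ℕ, 2*((n:ℝ)+1)/((((n:ℝ)+1)^2+r^2)^7)
        ≤ ∑' n : ℕ, 2/r^11*(1/(((n:ℝ)+r)*((n:ℝ)+1+r))) := by
          apply Summable.tsum_le_tsum ?_ hw (hgs.summable.mul_left (2/r^11))
          intro n
          have h := cmp_help ((n:ℝ)+1) r (cast_ge_one n) hr 5
          calc 2*((n:ℝ)+1)/((((n:ℝ)+1)^2+r^2)^7)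
              ≤ 2/(r^(2*5+1)*((((n:ℝ)+1)-1+r)*(((n:ℝ)+1)+r))) := h
            _ = 2/r^11*(1/(((n:ℝ)+r)*((n:ℝ)+1+r))) := by
                rw [div_mul_div_comm, mul_one]; ring_nf
      _ = 2/r^11*(1/r) := (hgs.mul_left (2/r^11)).tsum_eq
      _ = 2/r^12 := by
          rw [div_mul_div_comm, mul_one]; ring_nf
  have hsR : Summable (fun n => Rf r n) := by
    have hE : (fun n => Rf r n)
        = fun n : ℕ => (2*((n:ℝ)+1)/((((n:ℝ)+1)^2+r^2)^2))
            - ((2*((n:ℝ)+1)/((((n:ℝ)+1)^2+r^2)^2)) - Rf r n) := funext fun n => by ring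
    rw [hE]
    exact hbase.sub hmain.summable
  have hRb : ∀ n, |Rf r n| ≤ 150*r^4*(2*((n:ℝ)+1)/((((n:ℝ)+1)^2+r^2)^7)) := by
    intro n
    have hXD : bf r n * bf r (n+1) = (((n:ℝ)+1)^2+r^2)^2 + (r^2+1/4) := by
      unfold bf; push_cast; ring
    have h := R_bound ((n:ℝ)+1) r ((((n:ℝ)+1)^2+r^2+1/2)) (r^2+1/2) (r^2+1/4)
      (8*(r^2+1/4)/3 + 4*(r^2+1/2)*(r^2+1/4)/3 + (r^2+1/4)^2)
      (bf r n * bf r (n+1)) ((((n:ℝ)+1)^2+r^2)^2) (((n:ℝ)+1)^2+r^2)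
      (cast_ge_one n) hr rfl rfl rfl rfl rfl rfl hXD
    unfold Rf
    exact h
  have hS : S r = Mfun r + ∑' n, Rf r n := by
    have hadd := hmain.add hsR.hasSum
    have hE : (fun n : ℕ => (2*((n:ℝ)+1)/((((n:ℝ)+1)^2+r^2)^2) - Rf r n) + Rf r n)
        = fun n : ℕ => 2*((n:ℝ)+1)/((((n:ℝ)+1)^2+r^2)^2) := funext fun n => by ring
    rw [hE] at hadd
    rw [S]
    exact hadd.tsum_eq
  rw [hS, add_sub_cancel_left]
  have hnorm : Summable (fun n => ‖Rf r n‖) := by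
    simpa [Real.norm_eq_abs] using hsR.abs
  calc |∑' n, Rf r n| ≤ ∑' n, |Rf r n| := by
        have h := norm_tsum_le_tsum_norm hnorm
        simpa [Real.norm_eq_abs] using h
    _ ≤ ∑' n : ℕ, 150*r^4*(2*((n:ℝ)+1)/((((n:ℝ)+1)^2+r^2)^7)) :=
        Summable.tsum_le_tsum hRb hsR.abs (hw.mul_left (150*r^4))
    _ = 150*r^4 * ∑' n : ℕ, 2*((n:ℝ)+1)/((((n:ℝ)+1)^2+r^2)^7) := tsum_mul_left
    _ ≤ 150*r^4*(2/r^12) := mul_le_mul_of_nonneg_left htw (by positivity)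
    _ = 300/r^8 := by
        field_simp
        ring

lemma h0_lim : Tendsto (fun r : ℝ => (r^2)⁻¹) atTop (nhds 0) :=
  tendsto_inv_atTop_zero.comp (tendsto_pow_atTop (by norm_num))

lemma Mfun_limit : Tendsto (fun r => r^6*(Mfun r - 1/r^2 + 1/(6*r^4))) atTop (nhds (-1/30)) := by
  have hF : ContinuousAt (fun t : ℝ =>
      (-6 + 75*t + 21*t^2 + (15/4)*t^3 + (15/16)*t^4)/(180*(1+t/2)^5)) 0 := by
    apply ContinuousAt.div (by fun_prop) (by fun_prop)
    norm_num
  have htend := hF.tendsto.comp h0_lim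
  have hval : (-6 + 75*(0:ℝ) + 21*0^2 + 15/4*0^3 + 15/16*0^4)/(180*(1+0/2)^5) = -1/30 := by
    norm_num
  rw [hval] at htend
  apply Tendsto.congr' ?_ htend
  filter_upwards [Filter.eventually_ge_atTop (1:ℝ)] with r hr
  have hrne : r ≠ 0 := by intro h; rw [h] at hr; norm_num at hr
  have hp5 : (r^2+1/2) ≠ 0 := by positivity
  show (-6 + 75*(r^2)⁻¹ + 21*((r^2)⁻¹)^2 + (15/4)*((r^2)⁻¹)^3 + (15/16)*((r^2)⁻¹)^4)
      /(180*(1+(r^2)⁻¹/2)^5) = r^6*(Mfun r - 1/r^2 + 1/(6*r^4))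
  rw [Mfun]
  field_simp
  ring

lemma G_limit : Tendsto (fun r => r^6*(S r - 1/r^2 + 1/(6*r^4))) atTop (nhds (-1/30)) := by
  have herr : Tendsto (fun r => r^6*(S r - Mfun r)) atTop (nhds 0) := by
    have h300 : Tendsto (fun r : ℝ => 300*(r^2)⁻¹) atTop (nhds 0) := by
      have := h0_lim.const_mul (300:ℝ); simpa using this
    apply squeeze_zero_norm' ?_ h300
    filter_upwards [Filter.eventually_ge_atTop (1:ℝ)] with r hr
    have h6 : (0:ℝ) ≤ r^6 := by positivity
    have hrne : r ≠ 0 := by intro h; rw [h] at hr; norm_num at hr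
    calc ‖r^6*(S r - Mfun r)‖ = r^6*|S r - Mfun r| := by
          rw [Real.norm_eq_abs, abs_mul, abs_of_nonneg h6]
      _ ≤ r^6*(300/r^8) := mul_le_mul_of_nonneg_left (S_approx r hr) h6
      _ = 300*(r^2)⁻¹ := by field_simp
  have hsum := Mfun_limit.add herr
  have : (-1/30 : ℝ) + 0 = -1/30 := by norm_num
  rw [this] at hsum
  apply Tendsto.congr ?_ hsum
  intro r
  ring

lemma alpha_eq (r : ℝ) (hr : 1 ≤ r) :
    α r = (12*(r^6*(S r - 1/r^2 + 1/(6*r^4))) - 4/3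
        + (2*(r^6*(S r - 1/r^2 + 1/(6*r^4))) + 1/6)*(r^2)⁻¹
        - (r^6*(S r - 1/r^2 + 1/(6*r^4)))*((r^2)⁻¹)^2)
      / (-4 + (1 - 12*(r^6*(S r - 1/r^2 + 1/(6*r^4))))*(r^2)⁻¹
        - 6*(r^6*(S r - 1/r^2 + 1/(6*r^4)))*((r^2)⁻¹)^2) := by
  have hrne : r ≠ 0 := by intro h; rw [h] at hr; norm_num at hr
  have h1 : 12*(r^6*(S r - 1/r^2 + 1/(6*r^4))) - 4/3
        + (2*(r^6*(S r - 1/r^2 + 1/(6*r^4))) + 1/6)*(r^2)⁻¹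
        - (r^6*(S r - 1/r^2 + 1/(6*r^4)))*((r^2)⁻¹)^2
      = r^2*((12 * r ^ 4 + 2 * r ^ 2 - 1) * S r - 12 * r ^ 2) := by
    field_simp
    ring
  have h2 : -4 + (1 - 12*(r^6*(S r - 1/r^2 + 1/(6*r^4))))*(r^2)⁻¹
        - 6*(r^6*(S r - 1/r^2 + 1/(6*r^4)))*((r^2)⁻¹)^2
      = r^2*(12 - (12 * r ^ 2 + 6) * S r) := by
    field_simp
    ring
  rw [α, h1, h2, mul_div_mul_left _ _ (pow_ne_zero 2 hrne)]

theorem stmt_19 : Filter.Tendsto α Filter.atTop (nhds (13 / 30)) := by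
  have hG := G_limit
  have hF1 : Tendsto (fun r : ℝ => 12*(r^6*(S r - 1/r^2 + 1/(6*r^4))) - 4/3
        + (2*(r^6*(S r - 1/r^2 + 1/(6*r^4))) + 1/6)*(r^2)⁻¹
        - (r^6*(S r - 1/r^2 + 1/(6*r^4)))*((r^2)⁻¹)^2) atTop
      (nhds (12*(-1/30) - 4/3 + (2*(-1/30) + 1/6)*0 - (-1/30)*0^2)) :=
    (((hG.const_mul 12).sub_const (4/3)).add
      (((hG.const_mul 2).add_const (1/6)).mul h0_lim)).sub (hG.mul (h0_lim.pow 2))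
  have hF2 : Tendsto (fun r : ℝ => -4 + (1 - 12*(r^6*(S r - 1/r^2 + 1/(6*r^4))))*(r^2)⁻¹
        - 6*(r^6*(S r - 1/r^2 + 1/(6*r^4)))*((r^2)⁻¹)^2) atTop
      (nhds (-4 + (1 - 12*(-1/30))*0 - 6*(-1/30)*0^2)) :=
    ((((hG.const_mul 12).const_sub 1).mul h0_lim).const_add (-4)).sub
      ((hG.const_mul 6).mul (h0_lim.pow 2))
  have hdiv := hF1.div hF2 (by norm_num)
  have hval : (12*(-1/30 : ℝ) - 4/3 + (2*(-1/30) + 1/6)*0 - (-1/30)*0^2)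
      / (-4 + (1 - 12*(-1/30))*0 - 6*(-1/30)*0^2) = 13/30 := by norm_num
  rw [hval] at hdiv
  apply Tendsto.congr' ?_ hdiv
  filter_upwards [Filter.eventually_ge_atTop (1:ℝ)] with r hr
  exact (alpha_eq r hr).symm
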